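/- Let 1/2 < α < 1, H ≥ 1, N ≥ 1 be reals and Δ > 0. Let S(H, N, Δ, α) be the number of quadruples of integers (h₁, h₂, n₁, n₂) with H < h₁, h₂ ≤ 2H and N < n₁, n₂ ≤ 2N satisfying |h₁ n₁^α − h₂ n₂^α| ≤ Δ. Then there is an absolute constant C such that S(H, N, Δ, α) ≤ C (H N log(2HN) + Δ H N^{2−α}). -/

import Mathlib

open scoped Classical

open Finset

namespace SpacingAux

lemma bucket {ι : Type*} (S : Finset ι) (f : ι → ℝ) (g L : ℝ)
    (hg : 0 < g) (hL : 0 ≤ L)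
    (gap : ∀ x ∈ S, ∀ y ∈ S, x ≠ y → g ≤ |f x - f y|)
    (diam : ∀ x ∈ S, ∀ y ∈ S, |f x - f y| ≤ L) :
    (S.card : ℝ) ≤ 2 * L / g + 2 := by
  rcases S.eq_empty_or_nonempty with h | h
  · simp [h]; positivity
  obtain ⟨x₀, hx₀⟩ := h
  have hmem : ∀ x ∈ S, ⌊f x / g⌋ ∈ Finset.Icc ⌊(f x₀ - L)/g⌋ ⌊(f x₀ + L)/g⌋ := by
    intro x hx
    have hd := diam x hx x₀ hx₀
    have h1 : f x₀ - L ≤ f x := by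
      have := abs_le.mp hd; linarith [this.1, this.2]
    have h2 : f x ≤ f x₀ + L := by
      have := abs_le.mp hd; linarith [this.1, this.2]
    rw [Finset.mem_Icc]
    exact ⟨Int.floor_le_floor (by gcongr), Int.floor_le_floor (by gcongr)⟩
  have key : S.card ≤ (Finset.Icc ⌊(f x₀ - L)/g⌋ ⌊(f x₀ + L)/g⌋).card := by
    apply Finset.card_le_card_of_injOn (fun x => ⌊f x / g⌋) hmem
    intro x hx y hy hxy
    by_contra hne
    have h1 : g ≤ |f x - f y| := gap x hx y hy hne
    have h2 : |f x / g - f y / g| < 1 := Int.abs_sub_lt_one_of_floor_eq_floor hxy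
    have h3 : f x / g - f y / g = (f x - f y) / g := by ring
    rw [h3, abs_div, abs_of_pos hg] at h2
    have := (div_lt_one hg).mp h2
    linarith
  have h0 : (0:ℤ) ≤ ⌊(f x₀ + L)/g⌋ + 1 - ⌊(f x₀ - L)/g⌋ := by
    have : ⌊(f x₀ - L)/g⌋ ≤ ⌊(f x₀ + L)/g⌋ :=
      Int.floor_le_floor (by gcongr <;> linarith)
    omega
  have hcard : ((Finset.Icc ⌊(f x₀ - L)/g⌋ ⌊(f x₀ + L)/g⌋).card : ℝ)
      ≤ 2 * L / g + 2 := by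
    have hc : ((Finset.Icc ⌊(f x₀ - L)/g⌋ ⌊(f x₀ + L)/g⌋).card : ℝ)
        = ((⌊(f x₀ + L)/g⌋ + 1 - ⌊(f x₀ - L)/g⌋ : ℤ) : ℝ) := by
      rw [Int.card_Icc]
      exact_mod_cast congrArg (Int.cast : ℤ → ℝ) (Int.toNat_of_nonneg h0)
    rw [hc]
    push_cast
    have hu : (⌊(f x₀ + L)/g⌋ : ℝ) ≤ (f x₀ + L)/g := Int.floor_le _
    have hl : (f x₀ - L)/g - 1 < (⌊(f x₀ - L)/g⌋ : ℝ) := by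
      have := Int.lt_floor_add_one ((f x₀ - L)/g); linarith
    have he : (f x₀ + L)/g - (f x₀ - L)/g = 2 * L / g := by ring
    linarith
  calc (S.card : ℝ) ≤ _ := by exact_mod_cast key
    _ ≤ 2 * L / g + 2 := hcard

lemma cross_ne {u v u' v' : ℕ} (hu : 0 < u) (hu' : 0 < u')
    (huv : Nat.Coprime u v) (huv' : Nat.Coprime u' v')
    (hne : (u, v) ≠ (u', v')) : u * v' ≠ u' * v := by
  intro h
  have h1 : u ∣ u' := Nat.Coprime.dvd_of_dvd_mul_right huv ⟨v', by linarith [h]⟩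
  have h2 : u' ∣ u := Nat.Coprime.dvd_of_dvd_mul_right huv' ⟨v, by linarith [h]⟩
  have huu : u = u' := Nat.dvd_antisymm h1 h2
  subst huu
  have : v' = v := Nat.eq_of_mul_eq_mul_left hu h
  exact hne (by rw [this])

lemma ratio_gap {u v u' v' M : ℕ} (hu : 0 < u) (hv : 0 < v) (hu' : 0 < u') (hv' : 0 < v')
    (huv : Nat.Coprime u v) (huv' : Nat.Coprime u' v') (hvM : v < M) (hv'M : v' < M)
    (hne : (u, v) ≠ (u', v')) :
    1 / (M:ℝ)^2 ≤ |(u:ℝ)/v - (u':ℝ)/v'| := by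
  have hM : 0 < M := lt_of_le_of_lt (Nat.zero_le _) hvM
  have hvr : (0:ℝ) < v := by exact_mod_cast hv
  have hvr' : (0:ℝ) < v' := by exact_mod_cast hv'
  have hMr : (0:ℝ) < M := by exact_mod_cast hM
  have hcross : u * v' ≠ u' * v := cross_ne hu hu' huv huv' hne
  have hnum : (1:ℝ) ≤ |(u:ℝ) * v' - (v:ℝ) * u'| := by
    have hne' : (u * v' : ℤ) ≠ (v * u' : ℤ) := by
      intro hh
      have h2 : u * v' = v * u' := by exact_mod_cast hh
      exact hcross (by rw [h2, Nat.mul_comm])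
    have h1 : (1:ℤ) ≤ |(u * v' : ℤ) - (v * u' : ℤ)| := Int.one_le_abs (sub_ne_zero.mpr hne')
    calc (1:ℝ) = ((1:ℤ):ℝ) := by norm_num
      _ ≤ ((|(u * v' : ℤ) - (v * u' : ℤ)| : ℤ) : ℝ) := by exact_mod_cast h1
      _ = |(u:ℝ) * v' - (v:ℝ) * u'| := by push_cast; norm_num
  have heq : (u:ℝ)/v - (u':ℝ)/v' = ((u:ℝ) * v' - (v:ℝ) * u') / (v * v') :=
    div_sub_div _ _ (ne_of_gt hvr) (ne_of_gt hvr')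
  rw [heq, abs_div, abs_of_pos (by positivity : (0:ℝ) < (v:ℝ) * v')]
  have hvv : (v:ℝ) * v' ≤ (M:ℝ)^2 := by
    have h3 : (v:ℝ) ≤ M := by exact_mod_cast hvM.le
    have h2 : (v':ℝ) ≤ M := by exact_mod_cast hv'M.le
    nlinarith
  rw [div_le_div_iff₀ (by positivity) (by positivity)]
  nlinarith [abs_nonneg ((u:ℝ) * v' - (v:ℝ) * u')]

lemma rpow_gap_le {α x y : ℝ} (hα : 1/2 ≤ α) (hα1 : α ≤ 1)
    (hx : 1/2 ≤ x) (hx2 : x ≤ 2) (hy : 1/2 ≤ y) (hy2 : y ≤ 2) (hxy : y ≤ x) :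
    x - y ≤ 12 * (x ^ α - y ^ α) := by
  have hy0 : (0:ℝ) < y := by linarith
  have hx0 : (0:ℝ) < x := by linarith
  set r := x / y with hr
  have hr1 : 1 ≤ r := (one_le_div hy0).mpr hxy
  have hr4 : r ≤ 4 := by
    rw [hr, div_le_iff₀ hy0]; nlinarith
  set s := r ^ (1/2 : ℝ) with hs
  have hs1 : 1 ≤ s := by
    have h0 : r ^ (0:ℝ) ≤ r ^ (1/2:ℝ) :=
      Real.rpow_le_rpow_of_exponent_le hr1 (by norm_num : (0:ℝ) ≤ 1/2)
    rwa [Real.rpow_zero] at h0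
  have hssq : s ^ (2:ℕ) = r := by
    rw [hs, ← Real.rpow_natCast (r ^ (1/2:ℝ)) 2, ← Real.rpow_mul (by linarith : (0:ℝ) ≤ r)]
    norm_num
  have hs2 : s ≤ 2 := by nlinarith
  have hra : s ≤ r ^ α := Real.rpow_le_rpow_of_exponent_le hr1 hα
  have hya : (1/2 : ℝ) ≤ y ^ α := by
    have h1 : ((1:ℝ)/2) ^ α ≤ y ^ α :=
      Real.rpow_le_rpow (by norm_num) hy (by linarith)
    have h2 : ((1:ℝ)/2) ^ (1:ℝ) ≤ ((1:ℝ)/2) ^ α :=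
      Real.rpow_le_rpow_of_exponent_ge (by norm_num) (by norm_num) hα1
    rw [Real.rpow_one] at h2
    linarith
  have hdiv : x ^ α = y ^ α * r ^ α := by
    rw [hr, Real.div_rpow (le_of_lt hx0) (le_of_lt hy0)]
    have : y ^ α ≠ 0 := by positivity
    field_simp
  have hkey : 0 ≤ r ^ α - 1 ∧ r - 1 ≤ 3 * (r ^ α - 1) := by
    constructor <;> nlinarith
  have hxy' : x - y = y * (r - 1) := by
    rw [hr]; field_simp
  rw [hxy', hdiv]
  nlinarith [hkey.1, hkey.2, mul_nonneg (by linarith : (0:ℝ) ≤ 12 * y ^ α - 6) hkey.1]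

lemma rpow_gap_abs {α x y : ℝ} (hα : 1/2 ≤ α) (hα1 : α ≤ 1)
    (hx : 1/2 ≤ x) (hx2 : x ≤ 2) (hy : 1/2 ≤ y) (hy2 : y ≤ 2) :
    |x - y| ≤ 12 * |x ^ α - y ^ α| := by
  rcases le_total y x with h | h
  · have h1 := rpow_gap_le hα hα1 hx hx2 hy hy2 h
    have h2 : y ^ α ≤ x ^ α := Real.rpow_le_rpow (by linarith) h (by linarith)
    rw [abs_of_nonneg (by linarith : (0:ℝ) ≤ x - y),
        abs_of_nonneg (by linarith : (0:ℝ) ≤ x ^ α - y ^ α)]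
    exact h1
  · have h1 := rpow_gap_le hα hα1 hy hy2 hx hx2 h
    have h2 : x ^ α ≤ y ^ α := Real.rpow_le_rpow (by linarith) h (by linarith)
    rw [abs_sub_comm, abs_sub_comm (x ^ α),
        abs_of_nonneg (by linarith : (0:ℝ) ≤ y - x),
        abs_of_nonneg (by linarith : (0:ℝ) ≤ y ^ α - x ^ α)]
    exact h1

structure GoodP (α H N Δ : ℝ) (y : (ℕ × ℕ) × ℕ × ℕ) : Prop where
  ha : 0 < y.1.1
  hb : 0 < y.1.2
  hu : 0 < y.2.1
  hv : 0 < y.2.2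
  hab : Nat.Coprime y.1.1 y.1.2
  huv : Nat.Coprime y.2.1 y.2.2
  haH : y.1.1 ≤ ⌊2*H⌋₊
  hbH : y.1.2 ≤ ⌊2*H⌋₊
  huN : y.2.1 ≤ ⌊2*N⌋₊
  hvN : y.2.2 ≤ ⌊2*N⌋₊
  hr1 : 1/2 ≤ (y.2.1 : ℝ)/y.2.2
  hr2 : (y.2.1 : ℝ)/y.2.2 ≤ 2
  hclose : |(y.1.1 : ℝ)/y.1.2 - ((y.2.1:ℝ)/y.2.2) ^ α| ≤ Δ / (H * N ^ α)

lemma good_of_mem {α H N Δ : ℝ} (hα2 : 1/2 < α) (hα1 : α < 1) (hH : 1 ≤ H) (hN : 1 ≤ N)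
    (hΔ : 0 < Δ) {h₁ h₂ n₁ n₂ : ℕ}
    (hh₁ : ⌊H⌋₊ < h₁) (hh₁' : h₁ ≤ ⌊2*H⌋₊) (hh₂ : ⌊H⌋₊ < h₂) (hh₂' : h₂ ≤ ⌊2*H⌋₊)
    (hn₁ : ⌊N⌋₊ < n₁) (hn₁' : n₁ ≤ ⌊2*N⌋₊) (hn₂ : ⌊N⌋₊ < n₂) (hn₂' : n₂ ≤ ⌊2*N⌋₊)
    (hcond : |(h₁:ℝ) * (n₁:ℝ)^α - (h₂:ℝ) * (n₂:ℝ)^α| ≤ Δ) :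
    GoodP α H N Δ ((h₁ / (h₁.gcd h₂), h₂ / (h₁.gcd h₂)), (n₂ / (n₁.gcd n₂), n₁ / (n₁.gcd n₂))) := by
  have hH0 : (0:ℝ) < H := by linarith
  have hN0 : (0:ℝ) < N := by linarith
  -- basic positivity
  have hfH : 1 ≤ ⌊H⌋₊ := Nat.one_le_floor_iff _ |>.mpr hH
  have h₁pos : 0 < h₁ := lt_of_le_of_lt (Nat.zero_le _) hh₁
  have h₂pos : 0 < h₂ := lt_of_le_of_lt (Nat.zero_le _) hh₂
  have n₁pos : 0 < n₁ := lt_of_le_of_lt (Nat.zero_le _) hn₁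
  have n₂pos : 0 < n₂ := lt_of_le_of_lt (Nat.zero_le _) hn₂
  -- real bounds
  have hh₂r : (H:ℝ) < h₂ := by
    have := Nat.lt_floor_add_one H
    have h2 : (⌊H⌋₊ : ℝ) + 1 ≤ h₂ := by exact_mod_cast hh₂
    linarith
  have hn₁r : (N:ℝ) < n₁ := by
    have := Nat.lt_floor_add_one N
    have h2 : (⌊N⌋₊ : ℝ) + 1 ≤ n₁ := by exact_mod_cast hn₁
    linarith
  have hn₂r : (N:ℝ) < n₂ := by
    have := Nat.lt_floor_add_one N
    have h2 : (⌊N⌋₊ : ℝ) + 1 ≤ n₂ := by exact_mod_cast hn₂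
    linarith
  have hn₁r' : (n₁:ℝ) ≤ 2*N := by
    have h2 : (n₁:ℝ) ≤ ⌊2*N⌋₊ := by exact_mod_cast hn₁'
    have := Nat.floor_le (by positivity : (0:ℝ) ≤ 2*N)
    linarith
  have hn₂r' : (n₂:ℝ) ≤ 2*N := by
    have h2 : (n₂:ℝ) ≤ ⌊2*N⌋₊ := by exact_mod_cast hn₂'
    have := Nat.floor_le (by positivity : (0:ℝ) ≤ 2*N)
    linarith
  set t := h₁.gcd h₂ with htdef
  set d := n₁.gcd n₂ with hddef
  have ht : 0 < t := Nat.gcd_pos_of_pos_left _ h₁pos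
  have hd : 0 < d := Nat.gcd_pos_of_pos_left _ n₁pos
  have hat : h₁ / t * t = h₁ := Nat.div_mul_cancel (Nat.gcd_dvd_left _ _)
  have hbt : h₂ / t * t = h₂ := Nat.div_mul_cancel (Nat.gcd_dvd_right _ _)
  have hvd : n₁ / d * d = n₁ := Nat.div_mul_cancel (Nat.gcd_dvd_left _ _)
  have hud : n₂ / d * d = n₂ := Nat.div_mul_cancel (Nat.gcd_dvd_right _ _)
  have ha : 0 < h₁ / t := Nat.div_pos (Nat.le_of_dvd h₁pos (Nat.gcd_dvd_left _ _)) ht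
  have hb : 0 < h₂ / t := Nat.div_pos (Nat.le_of_dvd h₂pos (Nat.gcd_dvd_right _ _)) ht
  have hv : 0 < n₁ / d := Nat.div_pos (Nat.le_of_dvd n₁pos (Nat.gcd_dvd_left _ _)) hd
  have hu : 0 < n₂ / d := Nat.div_pos (Nat.le_of_dvd n₂pos (Nat.gcd_dvd_right _ _)) hd
  -- real versions of decompositions
  have hatr : ((h₁ / t : ℕ):ℝ) * t = h₁ := by exact_mod_cast congrArg (Nat.cast : ℕ → ℝ) hat
  have hbtr : ((h₂ / t : ℕ):ℝ) * t = h₂ := by exact_mod_cast congrArg (Nat.cast : ℕ → ℝ) hbt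
  have hvdr : ((n₁ / d : ℕ):ℝ) * d = n₁ := by exact_mod_cast congrArg (Nat.cast : ℕ → ℝ) hvd
  have hudr : ((n₂ / d : ℕ):ℝ) * d = n₂ := by exact_mod_cast congrArg (Nat.cast : ℕ → ℝ) hud
  have htr : (0:ℝ) < t := by exact_mod_cast ht
  have hdr : (0:ℝ) < d := by exact_mod_cast hd
  have har : (0:ℝ) < ((h₁ / t : ℕ):ℝ) := by exact_mod_cast ha
  have hbr : (0:ℝ) < ((h₂ / t : ℕ):ℝ) := by exact_mod_cast hb
  have hvr : (0:ℝ) < ((n₁ / d : ℕ):ℝ) := by exact_mod_cast hv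
  have hur : (0:ℝ) < ((n₂ / d : ℕ):ℝ) := by exact_mod_cast hu
  -- ratio equals n₂/n₁
  have hratio : ((n₂ / d : ℕ):ℝ) / ((n₁ / d : ℕ):ℝ) = (n₂:ℝ)/(n₁:ℝ) := by
    rw [← hudr, ← hvdr, mul_div_mul_right _ _ (ne_of_gt hdr)]
  refine ⟨ha, hb, hu, hv, Nat.coprime_div_gcd_div_gcd ht, ?_, le_trans (Nat.div_le_self _ _) hh₁',
    le_trans (Nat.div_le_self _ _) hh₂', le_trans (Nat.div_le_self _ _) hn₂',
    le_trans (Nat.div_le_self _ _) hn₁', ?_, ?_, ?_⟩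
  · -- coprime u v
    have hgc : 0 < n₂.gcd n₁ := by rw [Nat.gcd_comm]; exact hd
    have h := Nat.coprime_div_gcd_div_gcd hgc
    rwa [Nat.gcd_comm n₂ n₁] at h
  · rw [hratio, le_div_iff₀ (by positivity : (0:ℝ) < (n₁:ℝ))]
    linarith
  · rw [hratio, div_le_iff₀ (by positivity : (0:ℝ) < (n₁:ℝ))]
    linarith
  · -- hclose
    set A := ((h₁ / t : ℕ):ℝ)
    set B := ((h₂ / t : ℕ):ℝ)
    set U := ((n₂ / d : ℕ):ℝ)
    set V := ((n₁ / d : ℕ):ℝ)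
    have hn1a : (n₁:ℝ)^α = V^α * (d:ℝ)^α := by
      rw [← hvdr, Real.mul_rpow (le_of_lt hvr) (le_of_lt hdr)]
    have hn2a : (n₂:ℝ)^α = U^α * (d:ℝ)^α := by
      rw [← hudr, Real.mul_rpow (le_of_lt hur) (le_of_lt hdr)]
    have hda : (0:ℝ) < (d:ℝ)^α := Real.rpow_pos_of_pos hdr α
    have hVa : (0:ℝ) < V^α := Real.rpow_pos_of_pos hvr α
    have hX : |A * V^α - B * U^α| ≤ Δ / ((t:ℝ) * (d:ℝ)^α) := by
      rw [le_div_iff₀ (by positivity)]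
      have e1 : (h₁:ℝ) * (n₁:ℝ)^α - (h₂:ℝ) * (n₂:ℝ)^α
          = (A*V^α - B*U^α) * ((t:ℝ)*(d:ℝ)^α) := by
        rw [← hatr, ← hbtr, hn1a, hn2a]; ring
      have h2 := hcond
      rw [e1, abs_mul, abs_of_pos (by positivity : (0:ℝ) < (t:ℝ)*(d:ℝ)^α)] at h2
      exact h2
    have goal2 : |A/B - (U/V)^α| = |A*V^α - B*U^α| / (B * V^α) := by
      rw [Real.div_rpow (le_of_lt hur) (le_of_lt hvr),
        div_sub_div _ _ (ne_of_gt hbr) (ne_of_gt hVa), abs_div,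
        abs_of_pos (by positivity : (0:ℝ) < B * V^α)]
    rw [goal2]
    have step1 : |A*V^α - B*U^α| / (B * V^α) ≤ (Δ / ((t:ℝ) * (d:ℝ)^α)) / (B * V^α) := by
      gcongr
    have step2 : (Δ / ((t:ℝ) * (d:ℝ)^α)) / (B * V^α) = Δ / ((h₂:ℝ) * (n₁:ℝ)^α) := by
      rw [div_div]
      congr 1
      rw [← hbtr, hn1a]
      ring
    have step3 : Δ / ((h₂:ℝ) * (n₁:ℝ)^α) ≤ Δ / (H * N^α) := by
      have hNa : N^α ≤ (n₁:ℝ)^α :=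
        Real.rpow_le_rpow (le_of_lt hN0) (le_of_lt hn₁r) (by linarith)
      have hHNa : (0:ℝ) < H * N^α := by positivity
      gcongr

    linarith

noncomputable def Pq (α H N Δ : ℝ) : Finset (ℕ × ℕ × ℕ × ℕ) :=
  ((Finset.Ioc ⌊H⌋₊ ⌊2 * H⌋₊ ×ˢ Finset.Ioc ⌊H⌋₊ ⌊2 * H⌋₊ ×ˢ
      Finset.Ioc ⌊N⌋₊ ⌊2 * N⌋₊ ×ˢ Finset.Ioc ⌊N⌋₊ ⌊2 * N⌋₊).filter
    (fun q : ℕ × ℕ × ℕ × ℕ =>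
      |(q.1 : ℝ) * (q.2.2.1 : ℝ) ^ α - (q.2.1 : ℝ) * (q.2.2.2 : ℝ) ^ α| ≤ Δ))

def phi (q : ℕ × ℕ × ℕ × ℕ) : (ℕ × ℕ) × ℕ × ℕ :=
  ((q.1 / (q.1.gcd q.2.1), q.2.1 / (q.1.gcd q.2.1)),
   (q.2.2.2 / (q.2.2.1.gcd q.2.2.2), q.2.2.1 / (q.2.2.1.gcd q.2.2.2)))

lemma mem_Pq {α H N Δ : ℝ} {q : ℕ × ℕ × ℕ × ℕ} :
    q ∈ Pq α H N Δ ↔ (⌊H⌋₊ < q.1 ∧ q.1 ≤ ⌊2*H⌋₊) ∧ (⌊H⌋₊ < q.2.1 ∧ q.2.1 ≤ ⌊2*H⌋₊) ∧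
      (⌊N⌋₊ < q.2.2.1 ∧ q.2.2.1 ≤ ⌊2*N⌋₊) ∧ (⌊N⌋₊ < q.2.2.2 ∧ q.2.2.2 ≤ ⌊2*N⌋₊) ∧
      |(q.1 : ℝ) * (q.2.2.1 : ℝ) ^ α - (q.2.1 : ℝ) * (q.2.2.2 : ℝ) ^ α| ≤ Δ := by
  unfold Pq
  simp only [Finset.mem_filter, Finset.mem_product, Finset.mem_Ioc]
  tauto

lemma fiber_card (α H N Δ : ℝ) (y : (ℕ × ℕ) × ℕ × ℕ) :
    ((Pq α H N Δ).filter (fun q => phi q = y)).card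
      ≤ (⌊2*H⌋₊ / max y.1.1 y.1.2) * (⌊2*N⌋₊ / max y.2.1 y.2.2) := by
  have : ((Finset.Icc 1 (⌊2*H⌋₊ / max y.1.1 y.1.2)) ×ˢ
      (Finset.Icc 1 (⌊2*N⌋₊ / max y.2.1 y.2.2))).card
      = (⌊2*H⌋₊ / max y.1.1 y.1.2) * (⌊2*N⌋₊ / max y.2.1 y.2.2) := by
    rw [Finset.card_product, Nat.card_Icc, Nat.card_Icc]
    simp
  rw [← this]
  apply Finset.card_le_card_of_injOn (fun q => (q.1.gcd q.2.1, q.2.2.1.gcd q.2.2.2))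
  · intro q hq
    rw [Finset.mem_coe, Finset.mem_filter] at hq
    obtain ⟨hqP, hqy⟩ := hq
    rw [mem_Pq] at hqP
    have h₁pos : 0 < q.1 := lt_of_le_of_lt (Nat.zero_le _) hqP.1.1
    have h₂pos : 0 < q.2.1 := lt_of_le_of_lt (Nat.zero_le _) hqP.2.1.1
    have n₁pos : 0 < q.2.2.1 := lt_of_le_of_lt (Nat.zero_le _) hqP.2.2.1.1
    have n₂pos : 0 < q.2.2.2 := lt_of_le_of_lt (Nat.zero_le _) hqP.2.2.2.1.1
    set t := q.1.gcd q.2.1 with htd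
    set m := q.2.2.1.gcd q.2.2.2 with hmd
    have ht : 0 < t := Nat.gcd_pos_of_pos_left _ h₁pos
    have hm : 0 < m := Nat.gcd_pos_of_pos_left _ n₁pos
    have hy : y = phi q := hqy.symm
    have hA : 0 < max y.1.1 y.1.2 := by
      rw [hy]
      simp only [phi]
      have : 0 < q.1 / t := Nat.div_pos (Nat.le_of_dvd h₁pos (Nat.gcd_dvd_left _ _)) ht
      exact lt_of_lt_of_le this (le_max_left _ _)
    have hB : 0 < max y.2.1 y.2.2 := by
      rw [hy]
      simp only [phi]
      have : 0 < q.2.2.2 / m := Nat.div_pos (Nat.le_of_dvd n₂pos (Nat.gcd_dvd_right _ _)) hm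
      exact lt_of_lt_of_le this (le_max_left _ _)
    have hq1 : y.1.1 * t = q.1 := by
      rw [hy]; exact Nat.div_mul_cancel (Nat.gcd_dvd_left _ _)
    have hq2 : y.1.2 * t = q.2.1 := by
      rw [hy]; exact Nat.div_mul_cancel (Nat.gcd_dvd_right _ _)
    have hq3 : y.2.1 * m = q.2.2.2 := by
      rw [hy]; exact Nat.div_mul_cancel (Nat.gcd_dvd_right _ _)
    have hq4 : y.2.2 * m = q.2.2.1 := by
      rw [hy]; exact Nat.div_mul_cancel (Nat.gcd_dvd_left _ _)
    rw [Finset.mem_coe, Finset.mem_product, Finset.mem_Icc, Finset.mem_Icc]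
    refine ⟨⟨ht, ?_⟩, ⟨hm, ?_⟩⟩
    · rw [Nat.le_div_iff_mul_le hA]
      rcases le_total y.1.1 y.1.2 with hc | hc
      · rw [max_eq_right hc, Nat.mul_comm, hq2]; exact hqP.2.1.2
      · rw [max_eq_left hc, Nat.mul_comm, hq1]; exact hqP.1.2
    · rw [Nat.le_div_iff_mul_le hB]
      rcases le_total y.2.1 y.2.2 with hc | hc
      · rw [max_eq_right hc, Nat.mul_comm, hq4]; exact hqP.2.2.1.2
      · rw [max_eq_left hc, Nat.mul_comm, hq3]; exact hqP.2.2.2.1.2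
  · intro q hq q' hq' heq
    simp only [Finset.coe_filter, Set.mem_setOf_eq] at hq hq'
    obtain ⟨hqP, hqy⟩ := hq
    obtain ⟨hqP', hqy'⟩ := hq'
    have ht : q.1.gcd q.2.1 = q'.1.gcd q'.2.1 := congrArg Prod.fst heq
    have hm : q.2.2.1.gcd q.2.2.2 = q'.2.2.1.gcd q'.2.2.2 := congrArg Prod.snd heq
    have e1 : q.1 = q'.1 := by
      have a1 : q.1 / q.1.gcd q.2.1 * q.1.gcd q.2.1 = q.1 :=
        Nat.div_mul_cancel (Nat.gcd_dvd_left _ _)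
      have a2 : q'.1 / q'.1.gcd q'.2.1 * q'.1.gcd q'.2.1 = q'.1 :=
        Nat.div_mul_cancel (Nat.gcd_dvd_left _ _)
      have e0 : q.1 / q.1.gcd q.2.1 = q'.1 / q'.1.gcd q'.2.1 := by
        have := congrArg (fun z => z.1.1) (hqy.trans hqy'.symm)
        simpa [phi] using this
      rw [← a1, ← a2, e0, ht]
    have e2 : q.2.1 = q'.2.1 := by
      have a1 : q.2.1 / q.1.gcd q.2.1 * q.1.gcd q.2.1 = q.2.1 :=
        Nat.div_mul_cancel (Nat.gcd_dvd_right _ _)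
      have a2 : q'.2.1 / q'.1.gcd q'.2.1 * q'.1.gcd q'.2.1 = q'.2.1 :=
        Nat.div_mul_cancel (Nat.gcd_dvd_right _ _)
      have e0 : q.2.1 / q.1.gcd q.2.1 = q'.2.1 / q'.1.gcd q'.2.1 := by
        have := congrArg (fun z => z.1.2) (hqy.trans hqy'.symm)
        simpa [phi] using this
      rw [← a1, ← a2, e0, ht]
    have e3 : q.2.2.1 = q'.2.2.1 := by
      have a1 : q.2.2.1 / q.2.2.1.gcd q.2.2.2 * q.2.2.1.gcd q.2.2.2 = q.2.2.1 :=
        Nat.div_mul_cancel (Nat.gcd_dvd_left _ _)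
      have a2 : q'.2.2.1 / q'.2.2.1.gcd q'.2.2.2 * q'.2.2.1.gcd q'.2.2.2 = q'.2.2.1 :=
        Nat.div_mul_cancel (Nat.gcd_dvd_left _ _)
      have e0 : q.2.2.1 / q.2.2.1.gcd q.2.2.2 = q'.2.2.1 / q'.2.2.1.gcd q'.2.2.2 := by
        have := congrArg (fun z => z.2.2) (hqy.trans hqy'.symm)
        simpa [phi] using this
      rw [← a1, ← a2, e0, hm]
    have e4 : q.2.2.2 = q'.2.2.2 := by
      have a1 : q.2.2.2 / q.2.2.1.gcd q.2.2.2 * q.2.2.1.gcd q.2.2.2 = q.2.2.2 :=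
        Nat.div_mul_cancel (Nat.gcd_dvd_right _ _)
      have a2 : q'.2.2.2 / q'.2.2.1.gcd q'.2.2.2 * q'.2.2.1.gcd q'.2.2.2 = q'.2.2.2 :=
        Nat.div_mul_cancel (Nat.gcd_dvd_right _ _)
      have e0 : q.2.2.2 / q.2.2.1.gcd q.2.2.2 = q'.2.2.2 / q'.2.2.1.gcd q'.2.2.2 := by
        have := congrArg (fun z => z.2.1) (hqy.trans hqy'.symm)
        simpa [phi] using this
      rw [← a1, ← a2, e0, hm]
    exact Prod.ext e1 (Prod.ext e2 (Prod.ext e3 e4))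

def psi (y : (ℕ × ℕ) × ℕ × ℕ) : ℕ × ℕ :=
  (Nat.log 2 (max y.1.1 y.1.2), Nat.log 2 (max y.2.1 y.2.2))

lemma block_count_fst {α H N Δ : ℝ} (hα2 : 1/2 < α) (hα1 : α < 1)
    (hH : 1 ≤ H) (hN : 1 ≤ N) (hΔ : 0 < Δ)
    (T : Finset ((ℕ × ℕ) × ℕ × ℕ)) (hT : ∀ y ∈ T, GoodP α H N Δ y) (i j : ℕ) :
    ((T.filter (fun y => psi y = (i, j))).card : ℝ)
      ≤ ((2:ℝ)^(i+1))^2 * (2 * (24 * (Δ / (H * N ^ α))) * ((2:ℝ)^(j+1))^2 + 2) := by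
  set ε := Δ / (H * N ^ α) with hε
  have hε0 : 0 < ε := by
    rw [hε]
    have : (0:ℝ) < N ^ α := Real.rpow_pos_of_pos (by linarith) α
    positivity
  set S := T.filter (fun y => psi y = (i, j)) with hS
  have hSGood : ∀ y ∈ S, GoodP α H N Δ y := fun y hy => hT y (Finset.mem_filter.mp hy).1
  have hSij : ∀ y ∈ S, Nat.log 2 (max y.1.1 y.1.2) = i ∧ Nat.log 2 (max y.2.1 y.2.2) = j := by
    intro y hy
    have := (Finset.mem_filter.mp hy).2
    simp only [psi, Prod.mk.injEq] at this
    exact this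
  -- fiberwise over first component
  have hmaps : ∀ y ∈ S, y.1 ∈ S.image Prod.fst := fun y hy => Finset.mem_image_of_mem _ hy
  have hcard : S.card = ∑ r ∈ S.image Prod.fst, (S.filter (fun y => y.1 = r)).card :=
    Finset.card_eq_sum_card_fiberwise hmaps
  -- image bound
  have himage : (S.image Prod.fst).card ≤ (2^(i+1)) * (2^(i+1)) := by
    have hsub : S.image Prod.fst ⊆ Finset.Ico 1 (2^(i+1)) ×ˢ Finset.Ico 1 (2^(i+1)) := by
      intro r hr
      obtain ⟨y, hy, hyr⟩ := Finset.mem_image.mp hr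
      have hg := hSGood y hy
      have hij := hSij y hy
      have hlt : max y.1.1 y.1.2 < 2^(i+1) := by
        have := Nat.lt_pow_succ_log_self (by norm_num : 1 < 2) (max y.1.1 y.1.2)
        rwa [hij.1] at this
      rw [Finset.mem_product, ← hyr, Finset.mem_Ico, Finset.mem_Ico]
      exact ⟨⟨hg.ha, lt_of_le_of_lt (le_max_left _ _) hlt⟩,
             ⟨hg.hb, lt_of_le_of_lt (le_max_right _ _) hlt⟩⟩
    calc (S.image Prod.fst).card ≤ _ := Finset.card_le_card hsub
      _ ≤ 2^(i+1) * 2^(i+1) := by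
          rw [Finset.card_product, Nat.card_Ico]
          exact Nat.mul_le_mul (Nat.sub_le _ _) (Nat.sub_le _ _)
  -- per-fiber bucket bound
  have hfiber : ∀ r ∈ S.image Prod.fst,
      ((S.filter (fun y => y.1 = r)).card : ℝ) ≤ 2 * (24 * ε) / (1/((2:ℝ)^(j+1))^2) + 2 := by
    intro r hr
    apply bucket _ (fun y => (y.2.1 : ℝ)/(y.2.2 : ℝ)) _ _ (by positivity) (by positivity)
    · -- gap
      intro x hx y hy hxy
      rw [Finset.mem_filter] at hx hy
      have hgx := hSGood x hx.1
      have hgy := hSGood y hy.1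
      have hjx : max x.2.1 x.2.2 < 2^(j+1) := by
        have h2 := Nat.lt_pow_succ_log_self (by norm_num : 1 < 2) (max x.2.1 x.2.2)
        rwa [(hSij x hx.1).2] at h2
      have hjy : max y.2.1 y.2.2 < 2^(j+1) := by
        have h2 := Nat.lt_pow_succ_log_self (by norm_num : 1 < 2) (max y.2.1 y.2.2)
        rwa [(hSij y hy.1).2] at h2
      have hne2 : (x.2.1, x.2.2) ≠ (y.2.1, y.2.2) := by
        intro hc
        apply hxy
        have h1 : x.1 = y.1 := hx.2.trans hy.2.symm
        have h2 : x.2 = y.2 := by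
          have hu := congrArg Prod.fst hc
          have hv := congrArg Prod.snd hc
          exact Prod.ext hu hv
        exact Prod.ext h1 h2
      have := ratio_gap hgx.hu hgx.hv hgy.hu hgy.hv hgx.huv hgy.huv
        (lt_of_le_of_lt (le_max_right _ _) hjx) (lt_of_le_of_lt (le_max_right _ _) hjy) hne2
      calc 1/((2:ℝ)^(j+1))^2 = 1/(((2^(j+1) : ℕ)):ℝ)^2 := by push_cast; ring
        _ ≤ _ := this
    · -- diam
      intro x hx y hy
      rw [Finset.mem_filter] at hx hy
      have hgx := hSGood x hx.1
      have hgy := hSGood y hy.1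
      have hd : |(x.2.1:ℝ)/x.2.2 - (y.2.1:ℝ)/y.2.2|
          ≤ 12 * |((x.2.1:ℝ)/x.2.2)^α - ((y.2.1:ℝ)/y.2.2)^α| :=
        rpow_gap_abs (le_of_lt hα2) (le_of_lt hα1) hgx.hr1 hgx.hr2 hgy.hr1 hgy.hr2
      have hrx := hgx.hclose
      have hry := hgy.hclose
      have hxr : x.1 = r := hx.2
      have hyr : y.1 = r := hy.2
      have heq : (x.1.1:ℝ)/x.1.2 = (y.1.1:ℝ)/y.1.2 := by rw [hxr, hyr]
      have htri : |((x.2.1:ℝ)/x.2.2)^α - ((y.2.1:ℝ)/y.2.2)^α| ≤ 2 * ε := by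
        have h2 : ((x.1.1:ℝ)/x.1.2 - ((x.2.1:ℝ)/x.2.2)^α)
            - ((y.1.1:ℝ)/y.1.2 - ((y.2.1:ℝ)/y.2.2)^α)
            = ((y.2.1:ℝ)/y.2.2)^α - ((x.2.1:ℝ)/x.2.2)^α := by
          rw [heq]; ring
        have h3 : |((y.2.1:ℝ)/y.2.2)^α - ((x.2.1:ℝ)/x.2.2)^α|
            ≤ |(x.1.1:ℝ)/x.1.2 - ((x.2.1:ℝ)/x.2.2)^α|
              + |(y.1.1:ℝ)/y.1.2 - ((y.2.1:ℝ)/y.2.2)^α| := by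
          rw [← h2]
          exact abs_sub _ _
        rw [abs_sub_comm]
        calc |((y.2.1:ℝ)/y.2.2)^α - ((x.2.1:ℝ)/x.2.2)^α| ≤ _ := h3
          _ ≤ ε + ε := add_le_add hrx hry
          _ = 2 * ε := by ring
      calc |(x.2.1:ℝ)/x.2.2 - (y.2.1:ℝ)/y.2.2| ≤ 12 * (2*ε) := by
            calc _ ≤ _ := hd
              _ ≤ 12 * (2*ε) := by linarith [htri]
        _ = 24 * ε := by ring
  -- combine
  have : (S.card : ℝ) ≤ ((S.image Prod.fst).card : ℝ) * (2 * (24*ε) / (1/((2:ℝ)^(j+1))^2) + 2) := by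
    rw [hcard]
    push_cast
    calc (∑ r ∈ S.image Prod.fst, ((S.filter (fun y => y.1 = r)).card : ℝ))
        ≤ ∑ r ∈ S.image Prod.fst, (2 * (24*ε) / (1/((2:ℝ)^(j+1))^2) + 2) :=
          Finset.sum_le_sum hfiber
      _ = _ := by rw [Finset.sum_const, nsmul_eq_mul]
  calc (S.card : ℝ) ≤ _ := this
    _ ≤ ((2:ℝ)^(i+1))^2 * (2 * (24*ε) * ((2:ℝ)^(j+1))^2 + 2) := by
        have h1 : ((S.image Prod.fst).card : ℝ) ≤ ((2:ℝ)^(i+1))^2 := by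
          have := himage
          have h2 : ((S.image Prod.fst).card : ℝ) ≤ ((2^(i+1) * 2^(i+1) : ℕ) : ℝ) := by
            exact_mod_cast this
          calc ((S.image Prod.fst).card : ℝ) ≤ _ := h2
            _ = ((2:ℝ)^(i+1))^2 := by push_cast; ring
        have h3 : 2 * (24*ε) / (1/((2:ℝ)^(j+1))^2) = 2 * (24*ε) * ((2:ℝ)^(j+1))^2 := by
          field_simp
        rw [h3]
        have hpos : (0:ℝ) ≤ 2 * (24*ε) * ((2:ℝ)^(j+1))^2 + 2 := by positivity
        exact mul_le_mul_of_nonneg_right h1 hpos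


lemma block_count_snd {α H N Δ : ℝ} (hα2 : 1/2 < α) (hα1 : α < 1)
    (hH : 1 ≤ H) (hN : 1 ≤ N) (hΔ : 0 < Δ)
    (T : Finset ((ℕ × ℕ) × ℕ × ℕ)) (hT : ∀ y ∈ T, GoodP α H N Δ y) (i j : ℕ) :
    ((T.filter (fun y => psi y = (i, j))).card : ℝ)
      ≤ ((2:ℝ)^(j+1))^2 * (2 * (2 * (Δ / (H * N ^ α))) * ((2:ℝ)^(i+1))^2 + 2) := by
  set ε := Δ / (H * N ^ α) with hε
  have hε0 : 0 < ε := by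
    rw [hε]
    have : (0:ℝ) < N ^ α := Real.rpow_pos_of_pos (by linarith) α
    positivity
  set S := T.filter (fun y => psi y = (i, j)) with hS
  have hSGood : ∀ y ∈ S, GoodP α H N Δ y := fun y hy => hT y (Finset.mem_filter.mp hy).1
  have hSij : ∀ y ∈ S, Nat.log 2 (max y.1.1 y.1.2) = i ∧ Nat.log 2 (max y.2.1 y.2.2) = j := by
    intro y hy
    have := (Finset.mem_filter.mp hy).2
    simp only [psi, Prod.mk.injEq] at this
    exact this
  have hmaps : ∀ y ∈ S, y.2 ∈ S.image Prod.snd := fun y hy => Finset.mem_image_of_mem _ hy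
  have hcard : S.card = ∑ r ∈ S.image Prod.snd, (S.filter (fun y => y.2 = r)).card :=
    Finset.card_eq_sum_card_fiberwise hmaps
  have himage : (S.image Prod.snd).card ≤ (2^(j+1)) * (2^(j+1)) := by
    have hsub : S.image Prod.snd ⊆ Finset.Ico 1 (2^(j+1)) ×ˢ Finset.Ico 1 (2^(j+1)) := by
      intro r hr
      obtain ⟨y, hy, hyr⟩ := Finset.mem_image.mp hr
      have hg := hSGood y hy
      have hij := hSij y hy
      have hlt : max y.2.1 y.2.2 < 2^(j+1) := by
        have := Nat.lt_pow_succ_log_self (by norm_num : 1 < 2) (max y.2.1 y.2.2)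
        rwa [hij.2] at this
      rw [Finset.mem_product, ← hyr, Finset.mem_Ico, Finset.mem_Ico]
      exact ⟨⟨hg.hu, lt_of_le_of_lt (le_max_left _ _) hlt⟩,
             ⟨hg.hv, lt_of_le_of_lt (le_max_right _ _) hlt⟩⟩
    calc (S.image Prod.snd).card ≤ _ := Finset.card_le_card hsub
      _ ≤ 2^(j+1) * 2^(j+1) := by
          rw [Finset.card_product, Nat.card_Ico]
          exact Nat.mul_le_mul (Nat.sub_le _ _) (Nat.sub_le _ _)
  have hfiber : ∀ r ∈ S.image Prod.snd,
      ((S.filter (fun y => y.2 = r)).card : ℝ) ≤ 2 * (2 * ε) / (1/((2:ℝ)^(i+1))^2) + 2 := by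
    intro r hr
    apply bucket _ (fun y => (y.1.1 : ℝ)/(y.1.2 : ℝ)) _ _ (by positivity) (by positivity)
    · intro x hx y hy hxy
      rw [Finset.mem_filter] at hx hy
      have hgx := hSGood x hx.1
      have hgy := hSGood y hy.1
      have hix : max x.1.1 x.1.2 < 2^(i+1) := by
        have h2 := Nat.lt_pow_succ_log_self (by norm_num : 1 < 2) (max x.1.1 x.1.2)
        rwa [(hSij x hx.1).1] at h2
      have hiy : max y.1.1 y.1.2 < 2^(i+1) := by
        have h2 := Nat.lt_pow_succ_log_self (by norm_num : 1 < 2) (max y.1.1 y.1.2)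
        rwa [(hSij y hy.1).1] at h2
      have hne2 : (x.1.1, x.1.2) ≠ (y.1.1, y.1.2) := by
        intro hc
        apply hxy
        have h2 : x.2 = y.2 := hx.2.trans hy.2.symm
        have h1 : x.1 = y.1 := by
          have hu := congrArg Prod.fst hc
          have hv := congrArg Prod.snd hc
          exact Prod.ext hu hv
        exact Prod.ext h1 h2
      have := ratio_gap hgx.ha hgx.hb hgy.ha hgy.hb hgx.hab hgy.hab
        (lt_of_le_of_lt (le_max_right _ _) hix) (lt_of_le_of_lt (le_max_right _ _) hiy) hne2
      calc 1/((2:ℝ)^(i+1))^2 = 1/(((2^(i+1) : ℕ)):ℝ)^2 := by push_cast; ring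
        _ ≤ _ := this
    · intro x hx y hy
      rw [Finset.mem_filter] at hx hy
      have hgx := hSGood x hx.1
      have hgy := hSGood y hy.1
      have hrx := hgx.hclose
      have hry := hgy.hclose
      have heq : ((x.2.1:ℝ)/x.2.2)^α = ((y.2.1:ℝ)/y.2.2)^α := by
        rw [hx.2, hy.2]
      have h2 : ((x.1.1:ℝ)/x.1.2 - ((x.2.1:ℝ)/x.2.2)^α)
          - ((y.1.1:ℝ)/y.1.2 - ((y.2.1:ℝ)/y.2.2)^α)
          = (x.1.1:ℝ)/x.1.2 - (y.1.1:ℝ)/y.1.2 := by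
        rw [heq]; ring
      have h3 : |(x.1.1:ℝ)/x.1.2 - (y.1.1:ℝ)/y.1.2|
          ≤ |(x.1.1:ℝ)/x.1.2 - ((x.2.1:ℝ)/x.2.2)^α|
            + |(y.1.1:ℝ)/y.1.2 - ((y.2.1:ℝ)/y.2.2)^α| := by
        rw [← h2]
        exact abs_sub _ _
      calc |(x.1.1:ℝ)/x.1.2 - (y.1.1:ℝ)/y.1.2| ≤ _ := h3
        _ ≤ ε + ε := add_le_add hrx hry
        _ = 2 * ε := by ring
  have hstep : (S.card : ℝ) ≤ ((S.image Prod.snd).card : ℝ) * (2 * (2*ε) / (1/((2:ℝ)^(i+1))^2) + 2) := by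
    rw [hcard]
    push_cast
    calc (∑ r ∈ S.image Prod.snd, ((S.filter (fun y => y.2 = r)).card : ℝ))
        ≤ ∑ r ∈ S.image Prod.snd, (2 * (2*ε) / (1/((2:ℝ)^(i+1))^2) + 2) :=
          Finset.sum_le_sum hfiber
      _ = _ := by rw [Finset.sum_const, nsmul_eq_mul]
  calc (S.card : ℝ) ≤ _ := hstep
    _ ≤ ((2:ℝ)^(j+1))^2 * (2 * (2*ε) * ((2:ℝ)^(i+1))^2 + 2) := by
        have h1 : ((S.image Prod.snd).card : ℝ) ≤ ((2:ℝ)^(j+1))^2 := by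
          have h2 : ((S.image Prod.snd).card : ℝ) ≤ ((2^(j+1) * 2^(j+1) : ℕ) : ℝ) := by
            exact_mod_cast himage
          calc ((S.image Prod.snd).card : ℝ) ≤ _ := h2
            _ = ((2:ℝ)^(j+1))^2 := by push_cast; ring
        have h3 : 2 * (2*ε) / (1/((2:ℝ)^(i+1))^2) = 2 * (2*ε) * ((2:ℝ)^(i+1))^2 := by
          field_simp
        rw [h3]
        have hpos : (0:ℝ) ≤ 2 * (2*ε) * ((2:ℝ)^(i+1))^2 + 2 := by positivity
        exact mul_le_mul_of_nonneg_right h1 hpos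

lemma sq_pow (i : ℕ) : ((2:ℝ)^(i+1))^2 = 4 * 4^i := by
  have h1 : ((2:ℝ)^(i+1)) = 2 * 2^i := by rw [pow_succ]; ring
  have h2 : ((2:ℝ)^i)^2 = 4^i := by
    rw [← pow_mul, mul_comm i 2, pow_mul]; norm_num
  rw [h1, mul_pow, h2]; norm_num

lemma geom_le (K : ℕ) : ∑ i ∈ Finset.range K, (2:ℝ)^i ≤ 2^K := by
  calc ∑ i ∈ Finset.range K, (2:ℝ)^i = ((2:ℝ)^K - 1)/(2 - 1) :=
        geom_sum_eq (by norm_num : (2:ℝ) ≠ 1) K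
    _ = 2^K - 1 := by norm_num
    _ ≤ 2^K := by linarith

lemma inner_minmax (i L : ℕ) :
    ∑ j ∈ Finset.range L, (2:ℝ)^(min i j)/2^(max i j) ≤ 3 := by
  rw [← Finset.sum_filter_add_sum_filter_not (Finset.range L) (fun j => j ≤ i)]
  have h1 : ∑ j ∈ (Finset.range L).filter (fun j => j ≤ i), (2:ℝ)^(min i j)/2^(max i j) ≤ 2 := by
    have he : ∀ j ∈ (Finset.range L).filter (fun j => j ≤ i),
        (2:ℝ)^(min i j)/2^(max i j) = (2:ℝ)^j/2^i := by
      intro j hj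
      have hji : j ≤ i := (Finset.mem_filter.mp hj).2
      rw [min_eq_right hji, max_eq_left hji]
    rw [Finset.sum_congr rfl he]
    have hsub : (Finset.range L).filter (fun j => j ≤ i) ⊆ Finset.range (i+1) := by
      intro j hj
      rw [Finset.mem_filter] at hj
      rw [Finset.mem_range]
      omega
    calc ∑ j ∈ (Finset.range L).filter (fun j => j ≤ i), (2:ℝ)^j/2^i
        ≤ ∑ j ∈ Finset.range (i+1), (2:ℝ)^j/2^i :=
          Finset.sum_le_sum_of_subset_of_nonneg hsub (by intros; positivity)
      _ = (∑ j ∈ Finset.range (i+1), (2:ℝ)^j)/2^i := by rw [Finset.sum_div]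
      _ ≤ (2:ℝ)^(i+1)/2^i := by
          have := geom_le (i+1)
          gcongr
      _ = 2 := by rw [pow_succ]; field_simp
  have h2 : ∑ j ∈ (Finset.range L).filter (fun j => ¬ j ≤ i), (2:ℝ)^(min i j)/2^(max i j) ≤ 1 := by
    have he : ∀ j ∈ (Finset.range L).filter (fun j => ¬ j ≤ i),
        (2:ℝ)^(min i j)/2^(max i j) = (2:ℝ)^i * ((2:ℝ)⁻¹)^j := by
      intro j hj
      have hji : i ≤ j := by
        have := (Finset.mem_filter.mp hj).2
        omega
      rw [min_eq_left hji, max_eq_right hji, inv_pow]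
      field_simp
    rw [Finset.sum_congr rfl he]
    have hsub : (Finset.range L).filter (fun j => ¬ j ≤ i) ⊆ Finset.Ico (i+1) (L + i + 1) := by
      intro j hj
      rw [Finset.mem_filter, Finset.mem_range] at hj
      rw [Finset.mem_Ico]
      omega
    calc ∑ j ∈ (Finset.range L).filter (fun j => ¬ j ≤ i), (2:ℝ)^i * ((2:ℝ)⁻¹)^j
        ≤ ∑ j ∈ Finset.Ico (i+1) (L+i+1), (2:ℝ)^i * ((2:ℝ)⁻¹)^j :=
          Finset.sum_le_sum_of_subset_of_nonneg hsub (by intros; positivity)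
      _ = 2^i * ∑ j ∈ Finset.Ico (i+1) (L+i+1), ((2:ℝ)⁻¹)^j := by rw [Finset.mul_sum]
      _ ≤ 1 := by
          rw [geom_sum_Ico' (by norm_num : (2:ℝ)⁻¹ ≠ 1) (by omega : i+1 ≤ L+i+1)]
          have hp1 : (0:ℝ) < ((2:ℝ)⁻¹)^(L+i+1) := by positivity
          have hp2 : ((2:ℝ)⁻¹)^(i+1) = (1/2) * ((2:ℝ)⁻¹)^i := by
            rw [pow_succ]; ring
          have hp3 : (2:ℝ)^i * ((2:ℝ)⁻¹)^i = 1 := by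
            rw [← mul_pow]; norm_num
          have hp4 : (0:ℝ) < (2:ℝ)^i := by positivity
          have hp5 : (0:ℝ) < ((2:ℝ)⁻¹)^i := by positivity
          calc (2:ℝ)^i * ((((2:ℝ)⁻¹)^(i+1) - ((2:ℝ)⁻¹)^(L+i+1)) / (1 - 2⁻¹))
              ≤ (2:ℝ)^i * ((((2:ℝ)⁻¹)^(i+1)) / (1 - 2⁻¹)) := by gcongr; linarith
            _ = 1 := by rw [hp2]; field_simp; linarith [hp3]
  linarith


lemma pow_min_max (i j : ℕ) : (2:ℝ)^i * 2^j = 2^(min i j) * 2^(max i j) := by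
  rcases le_total i j with h | h
  · rw [min_eq_left h, max_eq_right h]
  · rw [min_eq_right h, max_eq_left h]; ring

lemma four_pow (i : ℕ) : (4:ℝ)^i = 2^i * 2^i := by
  rw [show (4:ℝ) = 2*2 by norm_num, mul_pow]

lemma block_count {α H N Δ : ℝ} (hα2 : 1/2 < α) (hα1 : α < 1)
    (hH : 1 ≤ H) (hN : 1 ≤ N) (hΔ : 0 < Δ)
    (T : Finset ((ℕ × ℕ) × ℕ × ℕ)) (hT : ∀ y ∈ T, GoodP α H N Δ y) (i j : ℕ) :
    ((T.filter (fun y => psi y = (i, j))).card : ℝ)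
      ≤ 768 * (Δ / (H * N ^ α)) * (4^i * 4^j) + 8 * 4^(min i j) := by
  have hε0 : 0 < Δ / (H * N ^ α) := by
    have : (0:ℝ) < N ^ α := Real.rpow_pos_of_pos (by linarith) α
    positivity
  rcases le_total i j with hij | hij
  · calc ((T.filter (fun y => psi y = (i, j))).card : ℝ)
        ≤ ((2:ℝ)^(i+1))^2 * (2 * (24 * (Δ / (H * N ^ α))) * ((2:ℝ)^(j+1))^2 + 2) :=
          block_count_fst hα2 hα1 hH hN hΔ T hT i j
      _ = 768 * (Δ / (H * N ^ α)) * (4^i * 4^j) + 8 * 4^i := by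
          rw [sq_pow, sq_pow]; ring
      _ ≤ _ := by rw [min_eq_left hij]
  · calc ((T.filter (fun y => psi y = (i, j))).card : ℝ)
        ≤ ((2:ℝ)^(j+1))^2 * (2 * (2 * (Δ / (H * N ^ α))) * ((2:ℝ)^(i+1))^2 + 2) :=
          block_count_snd hα2 hα1 hH hN hΔ T hT i j
      _ = 64 * (Δ / (H * N ^ α)) * (4^i * 4^j) + 8 * 4^j := by
          rw [sq_pow, sq_pow]; ring
      _ ≤ _ := by
          rw [min_eq_right hij]
          have h4 : (0:ℝ) ≤ (Δ / (H * N ^ α)) * (4^i * 4^j) := by positivity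
          nlinarith


lemma log2_half : (1:ℝ)/2 < Real.log 2 := by
  have := Real.log_two_gt_d9
  linarith

lemma K_le_log {X Y : ℝ} (hX : 1 ≤ X) (hY : 1 ≤ Y) :
    ((Nat.log 2 ⌊2*X⌋₊ + 1 : ℕ) : ℝ) ≤ 4 * Real.log (2 * X * Y) := by
  have hX0 : (0:ℝ) < X := by linarith
  have hfl1 : (1:ℕ) ≤ ⌊2*X⌋₊ := (Nat.one_le_floor_iff _).mpr (by linarith)
  set k := Nat.log 2 ⌊2*X⌋₊ with hk
  have hpow : ((2:ℝ))^k ≤ 2*X := by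
    have h1 : (2:ℕ)^k ≤ ⌊2*X⌋₊ := Nat.pow_log_le_self 2 (by omega)
    have h2 : ((2:ℕ)^k : ℝ) ≤ (⌊2*X⌋₊ : ℝ) := by exact_mod_cast h1
    have h3 : (⌊2*X⌋₊ : ℝ) ≤ 2*X := Nat.floor_le (by linarith)
    push_cast at h2
    linarith
  have hklog : (k:ℝ) * Real.log 2 ≤ Real.log (2*X) := by
    have h1 : Real.log ((2:ℝ)^k) ≤ Real.log (2*X) :=
      Real.log_le_log (by positivity) hpow
    rwa [Real.log_pow] at h1
  have hl2 : (0:ℝ) < Real.log 2 := by linarith [log2_half]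
  have hk2 : (k:ℝ) ≤ 2 * Real.log (2*X) := by
    have h1 : Real.log 2 ≤ Real.log (2*X) := Real.log_le_log (by norm_num) (by linarith)
    nlinarith [log2_half]
  have hmono : Real.log (2*X) ≤ Real.log (2*X*Y) :=
    Real.log_le_log (by positivity) (by nlinarith)
  have hlog1 : (1:ℝ) ≤ 2 * Real.log (2*X*Y) := by
    have h1 : Real.log 2 ≤ Real.log (2*X*Y) := Real.log_le_log (by norm_num) (by nlinarith)
    linarith [log2_half]
  push_cast
  nlinarith


lemma inner_minmax4 (i L : ℕ) :
    ∑ j ∈ Finset.range L, (4:ℝ)^(min i j)/((2:ℝ)^i * 2^j) ≤ 3 := by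
  have he : ∀ j : ℕ, (4:ℝ)^(min i j)/((2:ℝ)^i * 2^j) = (2:ℝ)^(min i j)/2^(max i j) := by
    intro j
    rw [four_pow, pow_min_max i j,
      mul_div_mul_left _ _ (by positivity : ((2:ℝ)^(min i j)) ≠ 0)]
  rw [Finset.sum_congr rfl (fun j _ => he j)]
  exact inner_minmax i L

end SpacingAux

open SpacingAux in
theorem spacing_lemma :
    ∃ C > (0 : ℝ), ∀ (α H N Δ : ℝ), 1 / 2 < α → α < 1 → 1 ≤ H → 1 ≤ N → 0 < Δ →
      (((Finset.Ioc ⌊H⌋₊ ⌊2 * H⌋₊ ×ˢ Finset.Ioc ⌊H⌋₊ ⌊2 * H⌋₊ ×ˢ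
          Finset.Ioc ⌊N⌋₊ ⌊2 * N⌋₊ ×ˢ Finset.Ioc ⌊N⌋₊ ⌊2 * N⌋₊).filter
        (fun q : ℕ × ℕ × ℕ × ℕ =>
          |(q.1 : ℝ) * (q.2.2.1 : ℝ) ^ α - (q.2.1 : ℝ) * (q.2.2.2 : ℝ) ^ α| ≤ Δ)).card : ℝ) ≤
      C * (H * N * Real.log (2 * H * N) + Δ * H * N ^ (2 - α)) := by
  refine ⟨65536, by norm_num, ?_⟩
  intro α H N Δ hα2 hα1 hH hN hΔ
  have hH0 : (0:ℝ) < H := by linarith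
  have hN0 : (0:ℝ) < N := by linarith
  have hNα : (0:ℝ) < N ^ α := Real.rpow_pos_of_pos hN0 α
  set ε := Δ / (H * N ^ α) with hεdef
  have hε0 : 0 < ε := by positivity
  show ((Pq α H N Δ).card : ℝ) ≤ _
  set T := (Pq α H N Δ).image phi with hTdef
  have hGood : ∀ y ∈ T, GoodP α H N Δ y := by
    intro y hy
    obtain ⟨q, hq, hqy⟩ := Finset.mem_image.mp hy
    rw [mem_Pq] at hq
    rw [← hqy]
    exact good_of_mem hα2 hα1 hH hN hΔ hq.1.1 hq.1.2 hq.2.1.1 hq.2.1.2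
      hq.2.2.1.1 hq.2.2.1.2 hq.2.2.2.1.1 hq.2.2.2.1.2 hq.2.2.2.2
  set K := Nat.log 2 ⌊2*H⌋₊ + 1 with hKdef
  set L := Nat.log 2 ⌊2*N⌋₊ + 1 with hLdef
  have hmapsT : ∀ y ∈ T, psi y ∈ Finset.range K ×ˢ Finset.range L := by
    intro y hy
    have hg := hGood y hy
    rw [Finset.mem_product, Finset.mem_range, Finset.mem_range]
    constructor
    · have h1 : max y.1.1 y.1.2 ≤ ⌊2*H⌋₊ := max_le hg.haH hg.hbH
      have := Nat.log_mono_right (b := 2) h1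
      simp only [psi]
      omega
    · have h1 : max y.2.1 y.2.2 ≤ ⌊2*N⌋₊ := max_le hg.huN hg.hvN
      have := Nat.log_mono_right (b := 2) h1
      simp only [psi]
      omega
  set F : (ℕ × ℕ) × ℕ × ℕ → ℝ :=
    fun y => (2*H/((max y.1.1 y.1.2 : ℕ):ℝ)) * (2*N/((max y.2.1 y.2.2 : ℕ):ℝ)) with hFdef
  have hfib : ∀ y ∈ T, (((Pq α H N Δ).filter (fun q => phi q = y)).card : ℝ) ≤ F y := by
    intro y hy
    have hg := hGood y hy
    have hA : 0 < max y.1.1 y.1.2 := lt_of_lt_of_le hg.ha (le_max_left _ _)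
    have hB : 0 < max y.2.1 y.2.2 := lt_of_lt_of_le hg.hu (le_max_left _ _)
    have hAr : (0:ℝ) < ((max y.1.1 y.1.2 : ℕ):ℝ) := by exact_mod_cast hA
    have hBr : (0:ℝ) < ((max y.2.1 y.2.2 : ℕ):ℝ) := by exact_mod_cast hB
    calc (((Pq α H N Δ).filter (fun q => phi q = y)).card : ℝ)
        ≤ ((⌊2*H⌋₊ / max y.1.1 y.1.2 : ℕ):ℝ) * ((⌊2*N⌋₊ / max y.2.1 y.2.2 : ℕ):ℝ) := by
          have := fiber_card α H N Δ y
          exact_mod_cast this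
      _ ≤ ((⌊2*H⌋₊:ℕ):ℝ)/((max y.1.1 y.1.2 : ℕ):ℝ)
            * (((⌊2*N⌋₊:ℕ):ℝ)/((max y.2.1 y.2.2 : ℕ):ℝ)) := by
          apply mul_le_mul Nat.cast_div_le Nat.cast_div_le (by positivity) (by positivity)
      _ ≤ F y := by
          simp only [hFdef]
          have h1 : ((⌊2*H⌋₊:ℕ):ℝ) ≤ 2*H := Nat.floor_le (by positivity)
          have h2 : ((⌊2*N⌋₊:ℕ):ℝ) ≤ 2*N := Nat.floor_le (by positivity)
          gcongr
  have hstep1 : ((Pq α H N Δ).card : ℝ) ≤ ∑ y ∈ T, F y := by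
    have h1 : (Pq α H N Δ).card
        = ∑ y ∈ T, ((Pq α H N Δ).filter (fun q => phi q = y)).card :=
      Finset.card_eq_sum_card_fiberwise (fun q hq => Finset.mem_image_of_mem _ hq)
    calc ((Pq α H N Δ).card : ℝ)
        = ∑ y ∈ T, (((Pq α H N Δ).filter (fun q => phi q = y)).card : ℝ) := by
          rw [h1]; push_cast; ring
      _ ≤ ∑ y ∈ T, F y := Finset.sum_le_sum hfib
  have hstep2 : ∑ y ∈ T, F y
      = ∑ p ∈ Finset.range K ×ˢ Finset.range L,
          ∑ y ∈ T.filter (fun y => psi y = p), F y :=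
    (Finset.sum_fiberwise_of_maps_to hmapsT F).symm
  have hblock : ∀ p ∈ Finset.range K ×ˢ Finset.range L,
      ∑ y ∈ T.filter (fun y => psi y = p), F y
        ≤ 3072 * ε * (H*N) * ((2:ℝ)^p.1 * 2^p.2)
          + 32*(H*N) * ((4:ℝ)^(min p.1 p.2)/((2:ℝ)^p.1 * 2^p.2)) := by
    rintro ⟨i, j⟩ hp
    have hterm : ∀ y ∈ T.filter (fun y => psi y = (i,j)),
        F y ≤ (2*H/(2:ℝ)^i)*(2*N/(2:ℝ)^j) := by
      intro y hy
      rw [Finset.mem_filter] at hy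
      have hg := hGood y hy.1
      have hij : Nat.log 2 (max y.1.1 y.1.2) = i ∧ Nat.log 2 (max y.2.1 y.2.2) = j := by
        have := hy.2
        simp only [psi, Prod.mk.injEq] at this
        exact this
      have hA : (2:ℝ)^i ≤ ((max y.1.1 y.1.2 : ℕ):ℝ) := by
        have h1 : (2:ℕ)^i ≤ max y.1.1 y.1.2 := by
          rw [← hij.1]
          refine Nat.pow_log_le_self 2 ?_
          have := hg.ha
          omega
        exact_mod_cast h1
      have hB : (2:ℝ)^j ≤ ((max y.2.1 y.2.2 : ℕ):ℝ) := by
        have h1 : (2:ℕ)^j ≤ max y.2.1 y.2.2 := by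
          rw [← hij.2]
          refine Nat.pow_log_le_self 2 ?_
          have := hg.hu
          omega
        exact_mod_cast h1
      simp only [hFdef]
      gcongr <;> positivity
    calc ∑ y ∈ T.filter (fun y => psi y = (i,j)), F y
        ≤ (T.filter (fun y => psi y = (i,j))).card • ((2*H/(2:ℝ)^i)*(2*N/(2:ℝ)^j)) :=
          Finset.sum_le_card_nsmul _ _ _ hterm
      _ = ((T.filter (fun y => psi y = (i,j))).card : ℝ)
            * ((2*H/(2:ℝ)^i)*(2*N/(2:ℝ)^j)) := nsmul_eq_mul _ _
      _ ≤ (768 * ε * (4^i * 4^j) + 8 * 4^(min i j)) * ((2*H/(2:ℝ)^i)*(2*N/(2:ℝ)^j)) := by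
          apply mul_le_mul_of_nonneg_right (block_count hα2 hα1 hH hN hΔ T hGood i j)
          positivity
      _ = 3072 * ε * (H*N) * ((2:ℝ)^i * 2^j)
          + 32*(H*N) * ((4:ℝ)^(min i j)/((2:ℝ)^i * 2^j)) := by
          rw [four_pow i, four_pow j]
          field_simp
          ring
  have h2K : (2:ℝ)^K ≤ 4*H := by
    have hfl1 : (1:ℕ) ≤ ⌊2*H⌋₊ := (Nat.one_le_floor_iff _).mpr (by linarith)
    have h1 : ((2:ℕ)^(Nat.log 2 ⌊2*H⌋₊) : ℝ) ≤ (⌊2*H⌋₊:ℝ) := by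
      exact_mod_cast Nat.pow_log_le_self 2 (by omega)
    have h2 : (⌊2*H⌋₊:ℝ) ≤ 2*H := Nat.floor_le (by positivity)
    rw [hKdef, pow_succ]
    push_cast at h1
    nlinarith
  have h2L : (2:ℝ)^L ≤ 4*N := by
    have hfl1 : (1:ℕ) ≤ ⌊2*N⌋₊ := (Nat.one_le_floor_iff _).mpr (by linarith)
    have h1 : ((2:ℕ)^(Nat.log 2 ⌊2*N⌋₊) : ℝ) ≤ (⌊2*N⌋₊:ℝ) := by
      exact_mod_cast Nat.pow_log_le_self 2 (by omega)
    have h2 : (⌊2*N⌋₊:ℝ) ≤ 2*N := Nat.floor_le (by positivity)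
    rw [hLdef, pow_succ]
    push_cast at h1
    nlinarith
  have hsumA : ∑ p ∈ Finset.range K ×ˢ Finset.range L, (2:ℝ)^p.1 * 2^p.2 ≤ 16*(H*N) := by
    rw [Finset.sum_product]
    calc ∑ i ∈ Finset.range K, ∑ j ∈ Finset.range L, (2:ℝ)^i * 2^j
        = (∑ i ∈ Finset.range K, (2:ℝ)^i) * (∑ j ∈ Finset.range L, (2:ℝ)^j) := by
          rw [Finset.sum_mul]
          exact Finset.sum_congr rfl (fun i _ => by rw [Finset.mul_sum])
      _ ≤ (2:ℝ)^K * (2:ℝ)^L := by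
          apply mul_le_mul (geom_le K) (geom_le L) ?_ (by positivity)
          apply Finset.sum_nonneg
          intros
          positivity
      _ ≤ (4*H) * (4*N) := by
          apply mul_le_mul h2K h2L (by positivity) (by positivity)
      _ = 16*(H*N) := by ring
  have hsumB : ∑ p ∈ Finset.range K ×ˢ Finset.range L,
      (4:ℝ)^(min p.1 p.2)/((2:ℝ)^p.1 * 2^p.2) ≤ 3*K := by
    rw [Finset.sum_product]
    calc ∑ i ∈ Finset.range K, ∑ j ∈ Finset.range L, (4:ℝ)^(min i j)/((2:ℝ)^i * 2^j)
        ≤ (Finset.range K).card • (3:ℝ) :=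
          Finset.sum_le_card_nsmul _ _ _ (fun i _ => inner_minmax4 i L)
      _ = 3*K := by rw [Finset.card_range, nsmul_eq_mul]; ring
  have hKreal : (K:ℝ) ≤ 4*Real.log (2*H*N) := by
    have := K_le_log hH hN
    rw [hKdef]
    push_cast at this ⊢
    linarith
  have hlogpos : 0 ≤ Real.log (2*H*N) := Real.log_nonneg (by nlinarith)
  have hNpow : N ^ ((2:ℝ) - α) = N^(2:ℕ) / N^α := by
    rw [Real.rpow_sub hN0]
    congr 1
    rw [show (2:ℝ) = ((2:ℕ):ℝ) by norm_num, Real.rpow_natCast]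
  have hid : 3072 * ε * (H*N) * (16*(H*N)) = 49152 * (Δ * H * N^((2:ℝ)-α)) := by
    rw [hεdef, hNpow]
    field_simp
    ring
  calc ((Pq α H N Δ).card : ℝ)
      ≤ ∑ y ∈ T, F y := hstep1
    _ = ∑ p ∈ Finset.range K ×ˢ Finset.range L,
          ∑ y ∈ T.filter (fun y => psi y = p), F y := hstep2
    _ ≤ ∑ p ∈ Finset.range K ×ˢ Finset.range L,
          (3072 * ε * (H*N) * ((2:ℝ)^p.1 * 2^p.2)
            + 32*(H*N) * ((4:ℝ)^(min p.1 p.2)/((2:ℝ)^p.1 * 2^p.2))) :=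
        Finset.sum_le_sum hblock
    _ = 3072 * ε * (H*N) * (∑ p ∈ Finset.range K ×ˢ Finset.range L, (2:ℝ)^p.1 * 2^p.2)
        + 32*(H*N) * (∑ p ∈ Finset.range K ×ˢ Finset.range L,
            (4:ℝ)^(min p.1 p.2)/((2:ℝ)^p.1 * 2^p.2)) := by
        rw [Finset.sum_add_distrib, Finset.mul_sum, Finset.mul_sum]
    _ ≤ 3072 * ε * (H*N) * (16*(H*N)) + 32*(H*N) * (3*(K:ℝ)) := by
        have t1 : (0:ℝ) ≤ 3072 * ε * (H*N) := by positivity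
        have t2 : (0:ℝ) ≤ 32*(H*N) := by positivity
        apply add_le_add
        · exact mul_le_mul_of_nonneg_left hsumA t1
        · exact mul_le_mul_of_nonneg_left hsumB t2
    _ ≤ 49152 * (Δ * H * N^((2:ℝ)-α)) + 96*(H*N) * (4*Real.log (2*H*N)) := by
        rw [← hid]
        have t2 : (0:ℝ) ≤ 96*(H*N) := by positivity
        have : 32*(H*N) * (3*(K:ℝ)) = 96*(H*N)*(K:ℝ) := by ring
        rw [this]
        apply add_le_add_right
        exact mul_le_mul_of_nonneg_left hKreal t2
    _ ≤ 65536 * (H * N * Real.log (2 * H * N) + Δ * H * N ^ (2 - α)) := by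
        have hp1 : 0 ≤ Δ * H * N ^ ((2:ℝ) - α) := by
          rw [hNpow]; positivity
        nlinarith [hlogpos, hp1, hH0, hN0,
          mul_nonneg (mul_nonneg (le_of_lt hH0) (le_of_lt hN0)) hlogpos]
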